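/- Let t ≥ 27, k ∈ {t-1,t}, and let s ≥ t+k+1 satisfy s ≡ t+k-1 (mod 2). Then 2(c(s+2,t,k) - c(s,t,k)) ≥ s+4. -/
import Mathlib

def bin3 (n : ℤ) : ℤ := n*(n-1)*(n-2)/6
def dtk (t k : ℤ) : ℤ := t*(t+1)/2 + k*(k+1)/2
def gtk (t k : ℤ) : ℤ := 2 + t*(t+1)*(2*t-5)/6 + k*(k+1)*(2*k-5)/6
def cc (s t k : ℤ) : ℤ := Int.fdiv (bin3 (s+3) - s * dtk t k - 6 - 3*(s-t-k-1)/2 + gtk t k) (s-1)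
def dd (s t k : ℤ) : ℤ := bin3 (s+3) - s * dtk t k - 6 - 3*(s-t-k-1)/2 + gtk t k - (s-1) * cc s t k
def gg (s t k : ℤ) : ℤ := cc s t k - 3 - 3*(s-t-k-1)/2

private lemma six_dvd_consec (n : ℤ) : (6:ℤ) ∣ n*(n-1)*(n-2) := by
  have h : ((n*(n-1)*(n-2) : ℤ) : ZMod 6) = 0 := by
    push_cast
    generalize (n : ZMod 6) = a
    revert a; decide
  exact (ZMod.intCast_zmod_eq_zero_iff_dvd _ 6).mp h

private lemma six_dvd_g (n : ℤ) : (6:ℤ) ∣ n*(n+1)*(2*n-5) := by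
  have h : ((n*(n+1)*(2*n-5) : ℤ) : ZMod 6) = 0 := by
    push_cast
    generalize (n : ZMod 6) = a
    revert a; decide
  exact (ZMod.intCast_zmod_eq_zero_iff_dvd _ 6).mp h

private lemma two_dvd_mul (n : ℤ) : (2:ℤ) ∣ n*(n+1) := by
  rcases Int.even_or_odd n with ⟨c,hc⟩ | ⟨c,hc⟩
  · exact ⟨c*(n+1), by rw [hc]; ring⟩
  · exact ⟨n*(c+1), by rw [hc]; ring⟩

private lemma six_bin3 (n : ℤ) : 6 * bin3 n = n*(n-1)*(n-2) := by
  rw [bin3, Int.mul_ediv_cancel' (six_dvd_consec n)]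

private lemma two_dtk (t k : ℤ) : 2 * dtk t k = t*(t+1) + k*(k+1) := by
  rw [dtk, mul_add, Int.mul_ediv_cancel' (two_dvd_mul t), Int.mul_ediv_cancel' (two_dvd_mul k)]

private lemma six_gtk (t k : ℤ) : 6 * gtk t k = 12 + t*(t+1)*(2*t-5) + k*(k+1)*(2*k-5) := by
  rw [gtk, mul_add, mul_add, Int.mul_ediv_cancel' (six_dvd_g t), Int.mul_ediv_cancel' (six_dvd_g k)]
  norm_num

set_option maxHeartbeats 800000 in
theorem stmt9 (t k s : ℤ) (ht : 27 ≤ t) (hk : k = t - 1 ∨ k = t)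
    (hs : t + k + 1 ≤ s) (hpar : (2:ℤ) ∣ (s - (t+k-1))) :
    s + 4 ≤ 2 * (cc (s+2) t k - cc s t k) := by
  have hs1 : (0:ℤ) < s - 1 := by omega
  have hs2 : (0:ℤ) < s + 1 := by omega
  have hd0 : (2:ℤ) ∣ 3*(s-t-k-1) := by omega
  have hd1 : (2:ℤ) ∣ 3*(s+2-t-k-1) := by omega
  have h40 : 2 * (3*(s-t-k-1)/2) = 3*(s-t-k-1) := Int.mul_ediv_cancel' hd0
  have h41 : 2 * (3*(s+2-t-k-1)/2) = 3*(s+2-t-k-1) := Int.mul_ediv_cancel' hd1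
  set A0 : ℤ := bin3 (s+3) - s * dtk t k - 6 - 3*(s-t-k-1)/2 + gtk t k with hA0
  set A1 : ℤ := bin3 (s+2+3) - (s+2) * dtk t k - 6 - 3*(s+2-t-k-1)/2 + gtk t k with hA1
  have e0 : 6 * A0 = (s+3)*(s+2)*(s+1) - 3*s*(t*(t+1)+k*(k+1)) - 36
      - 3*(3*(s-t-k-1)) + (12 + t*(t+1)*(2*t-5) + k*(k+1)*(2*k-5)) := by
    rw [hA0]
    linear_combination six_bin3 (s+3) - 3*s*(two_dtk t k) - 3*h40 + six_gtk t k
  have e1 : 6 * A1 = (s+5)*(s+4)*(s+3) - 3*(s+2)*(t*(t+1)+k*(k+1)) - 36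
      - 3*(3*(s+2-t-k-1)) + (12 + t*(t+1)*(2*t-5) + k*(k+1)*(2*k-5)) := by
    rw [hA1]
    linear_combination six_bin3 (s+2+3) - 3*(s+2)*(two_dtk t k) - 3*h41 + six_gtk t k
  have hc0 : cc s t k = A0 / (s-1) := by
    rw [cc, Int.fdiv_eq_ediv_of_nonneg _ (by omega : (0:ℤ) ≤ s - 1), ← hA0]
  have hc1 : cc (s+2) t k = A1 / (s+1) := by
    rw [cc]
    have h21 : s+2-1 = s+1 := by ring
    rw [h21, Int.fdiv_eq_ediv_of_nonneg _ (by omega : (0:ℤ) ≤ s + 1), ← hA1]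
  set q0 := A0 / (s-1) with hq0
  set q1 := A1 / (s+1) with hq1
  have hr0 : (s-1) * q0 + A0 % (s-1) = A0 := Int.mul_ediv_add_emod A0 (s-1)
  have hr1 : (s+1) * q1 + A1 % (s+1) = A1 := Int.mul_ediv_add_emod A1 (s+1)
  have hr0a : 0 ≤ A0 % (s-1) := Int.emod_nonneg A0 (by omega)
  have hr0b : A0 % (s-1) < s-1 := Int.emod_lt_of_pos A0 hs1
  have hr1a : 0 ≤ A1 % (s+1) := Int.emod_nonneg A1 (by omega)
  have hr1b : A1 % (s+1) < s+1 := Int.emod_lt_of_pos A1 hs2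
  rw [hc0, hc1]
  have hb1 : A1 - s ≤ (s+1) * q1 := by omega
  have hb0 : (s-1) * q0 ≤ A0 := by omega
  have key : (s+4) * ((s-1)*(s+1)) ≤ 2*(s-1)*(A1 - s) - 2*(s+1)*A0 := by
    rcases hk with hk | hk
    · -- k = t - 1, s ≥ 2t
      have h6' : 6*((2*(s-1)*(A1-s) - 2*(s+1)*A0) - (s+4)*((s-1)*(s+1))) =
          2*s^3 + 10*s - 16*t^3 + 72*t^2 - 80*t + 24 := by
        rw [hk] at e0 e1
        linear_combination 2*(s-1)*e1 - 2*(s+1)*e0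
      have hss : 2*t ≤ s := by omega
      have hcube : 0 ≤ (s-2*t)*(s*s + s*(2*t) + (2*t)*(2*t)) :=
        mul_nonneg (by omega) (by nlinarith [sq_nonneg (s+t), sq_nonneg t])
      nlinarith [hcube, mul_le_mul_of_nonneg_right ht (by omega : (0:ℤ) ≤ t)]
    · -- k = t, s ≥ 2t+1
      have h6' : 6*((2*(s-1)*(A1-s) - 2*(s+1)*A0) - (s+4)*((s-1)*(s+1))) =
          2*s^3 + 10*s - 16*t^3 + 48*t^2 - 8*t - 12 := by
        rw [hk] at e0 e1
        linear_combination 2*(s-1)*e1 - 2*(s+1)*e0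
      have hss : 2*t+1 ≤ s := by omega
      have hcube : 0 ≤ (s-(2*t+1))*(s*s + s*(2*t+1) + (2*t+1)*(2*t+1)) :=
        mul_nonneg (by omega) (by nlinarith [sq_nonneg (2*s+2*t+1), sq_nonneg (2*t+1)])
      nlinarith [hcube, mul_le_mul_of_nonneg_right ht (by omega : (0:ℤ) ≤ t)]
  have hstep : (s+4) * ((s-1)*(s+1)) ≤ (2*(q1 - q0)) * ((s-1)*(s+1)) := by
    have h2 : 2*(s-1)*(A1-s) - 2*(s+1)*A0 ≤ (2*(q1 - q0)) * ((s-1)*(s+1)) := by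
      nlinarith [mul_le_mul_of_nonneg_left hb1 (by omega : (0:ℤ) ≤ 2*(s-1)),
        mul_le_mul_of_nonneg_left hb0 (by omega : (0:ℤ) ≤ 2*(s+1))]
    linarith [key, h2]
  exact le_of_mul_le_mul_right hstep (by positivity)
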